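/- Let C(n,u) be a t-level EII code over a finite field F with t > 1, built as the sum of the 1-level EII codes C(n,u^{(i)}), 0 ≤ i ≤ t−1. Let u' = (u1 repeated s0+s1 times, u2 repeated s2 times, ..., u_t repeated s_t times), so that C(n,u') = Σ_{i=1}^{t−1} C(n,u^{(i)}) is a (t−1)-level EII code. Then C(n,u) is the internal direct sum of C(n,u^{(0)}) and C(n,u'); that is, C(n,u) = C(n,u^{(0)}) + C(n,u') and C(n,u^{(0)}) ∩ C(n,u') = {0}. -/

import Mathlib

open scoped BigOperators

section Defs

variable {F : Type*} [Field F]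

/-- `C` has minimum (symbol-)Hamming distance exactly `d`. -/
def HasMinDist {ι S : Type*} [Fintype ι] [Zero S] [DecidableEq S]
    (C : Set (ι → S)) (d : ℕ) : Prop :=
  (∀ c ∈ C, c ≠ 0 → d ≤ hammingNorm c) ∧ ∃ c ∈ C, c ≠ 0 ∧ hammingNorm c = d

/-- weight of an `m × n` array: the number of nonzero entries. -/
def arrayWt [DecidableEq F] {m n : ℕ} (A : Matrix (Fin m) (Fin n) F) : ℕ :=
  hammingNorm (fun p : Fin m × Fin n => A p.1 p.2)

/-- `C` admits a systematic encoder on its first `k` coordinates. -/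
def SystematicOn {n : ℕ} (C : Submodule F (Fin n → F)) (k : ℕ) : Prop :=
  Function.Bijective (fun (c : C) (i : Fin k) =>
    if h : (i : ℕ) < n then (c : Fin n → F) ⟨i, h⟩ else 0)

/-- symbols of the array in columns `a, a+1, ..., a+w-1`. -/
def colSymb [Zero F] {m n : ℕ} (A : Matrix (Fin m) (Fin n) F) (a w : ℕ) :
    Fin m → Fin w → F :=
  fun r k => if hk : a + (k : ℕ) < n then A r ⟨a + k, hk⟩ else 0

/-- the 1-level EII code with horizontal code `C0`, vertical code `V0` over `F^w`
(occupying columns `a,…,a+w-1`), and `a` initial zero columns. -/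
def OneLevelEII {m n w : ℕ} (C0 : Submodule F (Fin n → F))
    (V0 : Submodule F (Fin m → Fin w → F)) (a : ℕ) :
    Set (Matrix (Fin m) (Fin n) F) :=
  { A | (∀ r (c : Fin n), (c : ℕ) < a → A r c = 0) ∧ (∀ r, A r ∈ C0) ∧
        colSymb A a w ∈ V0 }

/-- the sum of the 1-level EII component codes of levels `a ≤ i < t`, where level `i`
has horizontal code `Chor i`, vertical code `Vc i` over `F^{u(i+1)-u(i)}`, and
`n - u(i+1)` initial zero columns. -/
def EIICodeRange {m n : ℕ} (a t : ℕ) (u : ℕ → ℕ)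
    (Chor : ℕ → Submodule F (Fin n → F))
    (Vc : (i : ℕ) → Submodule F (Fin m → Fin (u (i + 1) - u i) → F)) :
    Set (Matrix (Fin m) (Fin n) F) :=
  { A | ∃ g : ℕ → Matrix (Fin m) (Fin n) F,
        (∀ i, a ≤ i → i < t → g i ∈ OneLevelEII (Chor i) (Vc i) (n - u (i + 1))) ∧
        A = ∑ i ∈ Finset.Ico a t, g i }

/-- the t-level EII code: sum of the 1-level EII component codes of levels `0 ≤ i < t`. -/
def EIICode {m n : ℕ} (t : ℕ) (u : ℕ → ℕ)
    (Chor : ℕ → Submodule F (Fin n → F))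
    (Vc : (i : ℕ) → Submodule F (Fin m → Fin (u (i + 1) - u i) → F)) :
    Set (Matrix (Fin m) (Fin n) F) :=
  EIICodeRange 0 t u Chor Vc

end Defs

/-- For `t > 1`, the t-level EII code `C(n,u)` is the internal direct
sum of its first 1-level component code `C(n,u^{(0)})` and the `(t-1)`-level EII code
`C(n,u')` given by the remaining levels. -/
theorem stmt2 {F : Type*} [Field F] [DecidableEq F]
    {t n m : ℕ} (ht : 1 < t)
    (u s : ℕ → ℕ) (dH dV : ℕ → ℕ)
    (hu : ∀ i < t, u i < u (i + 1)) (hun : u t ≤ n)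
    (hs : ∀ i < t, 1 ≤ s i) (hst : s t = 0 → u t = n)
    (hm : m = ∑ i ∈ Finset.range (t + 1), s i)
    (Chor : ℕ → Submodule F (Fin n → F))
    (hnest : ∀ i, i + 1 < t → Chor (i + 1) < Chor i)
    (hCdim : ∀ i < t, Module.finrank F (Chor i) = n - u i)
    (hCsys : ∀ i < t, SystematicOn (Chor i) (n - u i))
    (hCdist : ∀ i < t, HasMinDist (Chor i : Set (Fin n → F)) (dH i))
    (Vc : (i : ℕ) → Submodule F (Fin m → Fin (u (i + 1) - u i) → F))
    (hVdim : ∀ i < t, Module.finrank F (Vc i)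
        = (m - ∑ j ∈ Finset.Icc (i + 1) t, s j) * (u (i + 1) - u i))
    (hVdist : ∀ i < t, HasMinDist (Vc i : Set (Fin m → Fin (u (i + 1) - u i) → F))
        (dV (t - 1 - i))) :
    (∀ A : Matrix (Fin m) (Fin n) F,
        A ∈ EIICode t u Chor Vc ↔
          ∃ x ∈ OneLevelEII (Chor 0) (Vc 0) (n - u 1),
            ∃ y ∈ EIICodeRange 1 t u Chor Vc, A = x + y) ∧
    (∀ A : Matrix (Fin m) (Fin n) F,
        A ∈ OneLevelEII (Chor 0) (Vc 0) (n - u 1) →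
        A ∈ EIICodeRange 1 t u Chor Vc → A = 0) := by

  constructor
  · intro A
    constructor
    · rintro ⟨g, hg, rfl⟩
      refine ⟨g 0, hg 0 le_rfl (by omega), ∑ i ∈ Finset.Ico 1 t, g i,
        ⟨g, fun i hi1 hit => hg i (by omega) hit, rfl⟩, ?_⟩
      rw [← Finset.sum_eq_sum_Ico_succ_bot (by omega : 0 < t)]
    · rintro ⟨x, hx, y, ⟨g, hg, rfl⟩, rfl⟩
      refine ⟨fun i => if i = 0 then x else g i, ?_, ?_⟩
      · intro i _ hit
        by_cases h0 : i = 0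
        · subst h0; simpa using hx
        · simpa [h0] using hg i (by omega) hit
      · rw [Finset.sum_eq_sum_Ico_succ_bot (by omega : 0 < t)]
        simp only [if_pos rfl]
        congr 1
        refine Finset.sum_congr rfl fun i hi => ?_
        have : i ≠ 0 := by
          simp only [Finset.mem_Ico] at hi; omega
        simp [this]
  · rintro A ⟨hz, _, _⟩ ⟨g, hg, rfl⟩
    have hle : ∀ i, 1 ≤ i → i < t → Chor i ≤ Chor 1 := by
      intro i h1 hit
      induction i with
      | zero => omega
      | succ j ih =>
        rcases Nat.eq_or_lt_of_le h1 with h | h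
        · rw [← h]
        · exact le_trans (le_of_lt (hnest j hit)) (ih (by omega) (by omega))
    have hrow : ∀ r, (∑ i ∈ Finset.Ico 1 t, g i) r ∈ Chor 1 := by
      intro r
      have : (∑ i ∈ Finset.Ico 1 t, g i) r = ∑ i ∈ Finset.Ico 1 t, g i r := by
        funext c
        rw [Matrix.sum_apply, Finset.sum_apply]
      rw [this]
      refine Submodule.sum_mem _ fun i hi => ?_
      rw [Finset.mem_Ico] at hi
      exact hle i hi.1 hi.2 ((hg i hi.1 hi.2).2.1 r)
    funext r c
    have hinj := (hCsys 1 ht).1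
    have : (⟨(∑ i ∈ Finset.Ico 1 t, g i) r, hrow r⟩ : Chor 1)
        = (⟨0, Submodule.zero_mem _⟩ : Chor 1) := by
      apply hinj
      funext j
      simp only
      split
      · next h => exact hz r ⟨j, h⟩ j.2
      · rfl
    have h0 := congrArg Subtype.val this
    simp only at h0
    exact congrFun h0 c
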